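/- Let (X_t) be a Markov chain on a finite state space and S = Σ_{t=0}^{T-1} f(X_t) for some f : V → [0,1]. Suppose there is a constant M > 0 such that for every state w and every 0 ≤ s ≤ T−1, E[Σ_{t=s}^{T-1} f(X_t) | X_s = w] ≤ M. Then for every integer λ ≥ 1 and every start state, P(S ≥ λ·(2M+1)) ≤ 2^{−λ}. -/

import Mathlib

set_option linter.unusedSectionVars false
set_option maxHeartbeats 1000000


/-- The probability weight of a path `x : Fin (T+1) → V` of a Markov chain with
transition matrix `P` and initial distribution `ν`. -/
noncomputable def pathWeight {V : Type*} [Fintype V] (P : Matrix V V ℝ) (ν : V → ℝ)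
    (T : ℕ) (x : Fin (T + 1) → V) : ℝ :=
  ν (x 0) * ∏ i : Fin T, P (x i.castSucc) (x i.succ)


section aux
variable {V : Type*} [Fintype V] [DecidableEq V]

/-- Weight of a chain path of `n` steps starting at `w`, visiting the states `z`. -/
noncomputable def chainW (P : Matrix V V ℝ) : (n : ℕ) → V → (Fin n → V) → ℝ
  | 0, _, _ => 1
  | n+1, w, z => P w (z 0) * chainW P n (z 0) (Fin.tail z)

/-- Sum of `f` over the first `n` states of the path starting at `w` visiting `z`. -/
noncomputable def Ssum (f : V → ℝ) : (n : ℕ) → V → (Fin n → V) → ℝ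
  | 0, _, _ => 0
  | n+1, w, z => f w + Ssum f n (z 0) (Fin.tail z)

lemma sum_pi_succ {n : ℕ} (g : (Fin (n+1) → V) → ℝ) :
    ∑ z : Fin (n+1) → V, g z = ∑ v : V, ∑ z : Fin n → V, g (Fin.cons v z) := by
  rw [← Equiv.sum_comp (Fin.consEquiv (fun _ => V)) g, Fintype.sum_prod_type]
  simp [Fin.consEquiv]

lemma chainW_nonneg (P : Matrix V V ℝ) (hnn : ∀ u v, 0 ≤ P u v) :
    ∀ (n : ℕ) (w : V) (z : Fin n → V), 0 ≤ chainW P n w z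
  | 0, _, _ => by simp [chainW]
  | n+1, w, z => by
      rw [chainW]
      exact mul_nonneg (hnn _ _) (chainW_nonneg P hnn n _ _)

lemma Ssum_nonneg (f : V → ℝ) (hf0 : ∀ u, 0 ≤ f u) :
    ∀ (n : ℕ) (w : V) (z : Fin n → V), 0 ≤ Ssum f n w z
  | 0, _, _ => by simp [Ssum]
  | n+1, w, z => by
      rw [Ssum]
      exact add_nonneg (hf0 _) (Ssum_nonneg f hf0 n _ _)

lemma chainW_sum_one (P : Matrix V V ℝ) (hst : ∀ u, ∑ v, P u v = 1) :
    ∀ (n : ℕ) (w : V), ∑ z : Fin n → V, chainW P n w z = 1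
  | 0, w => by simp [chainW]
  | n+1, w => by
      rw [sum_pi_succ]
      simp only [chainW, Fin.cons_zero, Fin.tail_cons]
      calc ∑ v, ∑ z : Fin n → V, P w v * chainW P n v z
          = ∑ v, P w v * ∑ z : Fin n → V, chainW P n v z := by
            simp [Finset.mul_sum]
        _ = 1 := by
            simp only [chainW_sum_one P hst n, mul_one]; exact hst w

lemma Ssum_exp (P : Matrix V V ℝ) (hst : ∀ u, ∑ v, P u v = 1) (f : V → ℝ) :
    ∀ (n : ℕ) (w : V),
      ∑ z : Fin n → V, chainW P n w z * Ssum f n w z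
        = ∑ r ∈ Finset.range n, ∑ u, (P ^ r) w u * f u
  | 0, w => by simp [chainW, Ssum]
  | n+1, w => by
      rw [sum_pi_succ]
      simp only [chainW, Ssum, Fin.cons_zero, Fin.tail_cons]
      have lhs : ∀ v, ∑ z : Fin n → V,
          P w v * chainW P n v z * (f w + Ssum f n v z)
          = P w v * f w + P w v * ∑ r ∈ Finset.range n, ∑ u, (P ^ r) v u * f u := by
        intro v
        have e1 : ∑ z : Fin n → V, P w v * chainW P n v z * (f w + Ssum f n v z)
            = (P w v * f w) * (∑ z : Fin n → V, chainW P n v z)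
              + P w v * (∑ z : Fin n → V, chainW P n v z * Ssum f n v z) := by
          rw [Finset.mul_sum, Finset.mul_sum, ← Finset.sum_add_distrib]
          exact Finset.sum_congr rfl fun z _ => by ring
        rw [e1, chainW_sum_one P hst n, Ssum_exp P hst f n, mul_one]
      simp only [lhs]
      rw [Finset.sum_add_distrib, ← Finset.sum_mul, hst w, one_mul]
      rw [Finset.sum_range_succ']
      have g0 : ∑ u, (P ^ 0) w u * f u = f w := by
        simp [Matrix.one_apply, ite_mul]
      rw [g0, add_comm]
      congr 1
      have gs : ∀ r, ∑ u, (P ^ (r+1)) w u * f u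
          = ∑ v, P w v * ∑ u, (P ^ r) v u * f u := by
        intro r
        simp only [pow_succ', Matrix.mul_apply, Finset.sum_mul, Finset.mul_sum, mul_assoc]
        rw [Finset.sum_comm]
      simp only [gs, Finset.mul_sum]
      rw [Finset.sum_comm]

/-- Markov's inequality for the remaining sum of a chain started at `w`. -/
lemma markov_chain (P : Matrix V V ℝ) (hnn : ∀ u v, 0 ≤ P u v)
    (hst : ∀ u, ∑ v, P u v = 1) (f : V → ℝ) (hf0 : ∀ u, 0 ≤ f u)
    (M : ℝ) (n : ℕ) (w : V)
    (hE : ∑ r ∈ Finset.range n, ∑ u, (P ^ r) w u * f u ≤ M)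
    (c : ℝ) (hc : 0 < c) :
    ∑ z ∈ Finset.univ.filter (fun z : Fin n → V => c ≤ Ssum f n w z),
      chainW P n w z ≤ M / c := by
  rw [le_div_iff₀ hc]
  calc (∑ z ∈ Finset.univ.filter (fun z : Fin n → V => c ≤ Ssum f n w z),
        chainW P n w z) * c
      = ∑ z ∈ Finset.univ.filter (fun z : Fin n → V => c ≤ Ssum f n w z),
          chainW P n w z * c := by rw [Finset.sum_mul]
    _ ≤ ∑ z ∈ Finset.univ.filter (fun z : Fin n → V => c ≤ Ssum f n w z),
          chainW P n w z * Ssum f n w z := by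
        refine Finset.sum_le_sum fun z hz => ?_
        exact mul_le_mul_of_nonneg_left (Finset.mem_filter.mp hz).2
          (chainW_nonneg P hnn n w z)
    _ ≤ ∑ z : Fin n → V, chainW P n w z * Ssum f n w z := by
        refine Finset.sum_le_sum_of_subset_of_nonneg (Finset.filter_subset _ _)
          fun z _ _ => mul_nonneg (chainW_nonneg P hnn n w z) (Ssum_nonneg f hf0 n w z)
    _ = ∑ r ∈ Finset.range n, ∑ u, (P ^ r) w u * f u := Ssum_exp P hst f n w
    _ ≤ M := hE

/-- Restart step: crossing one more level of width `2M+1` halves the probability. -/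
lemma step_lemma (P : Matrix V V ℝ) (hnn : ∀ u v, 0 ≤ P u v)
    (hst : ∀ u, ∑ v, P u v = 1) (f : V → ℝ) (hf0 : ∀ u, 0 ≤ f u)
    (hf1 : ∀ u, f u ≤ 1) (M : ℝ) (hM : 0 < M) (T : ℕ)
    (hexp' : ∀ (w : V) (n : ℕ), n ≤ T →
      ∑ r ∈ Finset.range n, ∑ u, (P ^ r) w u * f u ≤ M) (b : ℝ) :
    ∀ (n : ℕ), n ≤ T → ∀ (w : V) (a : ℝ), 0 ≤ a → a < b →
      ∑ z ∈ Finset.univ.filter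
          (fun z : Fin n → V => b + (2*M+1) ≤ a + Ssum f n w z), chainW P n w z
      ≤ 1/2 * ∑ z ∈ Finset.univ.filter
          (fun z : Fin n → V => b ≤ a + Ssum f n w z), chainW P n w z
  | 0, _, w, a, ha, hab => by
      have h0 : Finset.univ.filter
          (fun z : Fin 0 → V => b + (2*M+1) ≤ a + Ssum f 0 w z) = ∅ := by
        refine Finset.filter_false_of_mem fun z _ => ?_
        simp only [Ssum]
        intro h; linarith
      rw [h0, Finset.sum_empty]
      have : (0:ℝ) ≤ ∑ z ∈ Finset.univ.filter
          (fun z : Fin 0 → V => b ≤ a + Ssum f 0 w z), chainW P 0 w z :=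
        Finset.sum_nonneg fun z _ => chainW_nonneg P hnn 0 w z
      linarith
  | n+1, hn, w, a, ha, hab => by
      by_cases hA : b ≤ a + f w
      · -- crossing at time 0: use Markov
        have hfil : Finset.univ.filter
            (fun z : Fin (n+1) → V => b ≤ a + Ssum f (n+1) w z) = Finset.univ := by
          refine Finset.filter_true_of_mem fun z _ => ?_
          have := Ssum_nonneg f hf0 n (z 0) (Fin.tail z)
          rw [Ssum]; linarith
        rw [hfil, chainW_sum_one P hst]
        have hc : (0:ℝ) < b + (2*M+1) - a := by linarith
        have hfil2 : Finset.univ.filter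
            (fun z : Fin (n+1) → V => b + (2*M+1) ≤ a + Ssum f (n+1) w z)
            = Finset.univ.filter
            (fun z : Fin (n+1) → V => b + (2*M+1) - a ≤ Ssum f (n+1) w z) := by
          refine Finset.filter_congr fun z _ => ?_
          constructor <;> intro <;> linarith
        rw [hfil2]
        have hmk := markov_chain P hnn hst f hf0 M (n+1) w (hexp' w (n+1) hn) _ hc
        refine hmk.trans ?_
        rw [div_le_iff₀ hc]
        linarith
      · -- no crossing at time 0: recurse
        push_neg at hA
        have key : ∀ (c : ℝ), ∑ z ∈ Finset.univ.filter
              (fun z : Fin (n+1) → V => c ≤ a + Ssum f (n+1) w z), chainW P (n+1) w z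
            = ∑ v, P w v * ∑ z ∈ Finset.univ.filter
              (fun z : Fin n → V => c ≤ (a + f w) + Ssum f n v z), chainW P n v z := by
          intro c
          rw [Finset.sum_filter,
            sum_pi_succ (fun z => if c ≤ a + Ssum f (n+1) w z then chainW P (n+1) w z else 0)]
          refine Finset.sum_congr rfl fun v _ => ?_
          rw [Finset.mul_sum, Finset.sum_filter]
          refine Finset.sum_congr rfl fun z _ => ?_
          simp only [chainW, Ssum, Fin.cons_zero, Fin.tail_cons, mul_ite, mul_zero]
          rw [← add_assoc]
        rw [key (b + (2*M+1)), key b, Finset.mul_sum]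
        refine Finset.sum_le_sum fun v _ => ?_
        have hIH := step_lemma P hnn hst f hf0 hf1 M hM T hexp' b n
          (le_trans (Nat.le_succ n) hn) v (a + f w)
          (add_nonneg ha (hf0 w)) hA
        calc P w v * ∑ z ∈ Finset.univ.filter
              (fun z : Fin n → V => b + (2*M+1) ≤ (a + f w) + Ssum f n v z),
              chainW P n v z
            ≤ P w v * (1/2 * ∑ z ∈ Finset.univ.filter
              (fun z : Fin n → V => b ≤ (a + f w) + Ssum f n v z), chainW P n v z) :=
              mul_le_mul_of_nonneg_left hIH (hnn w v)
          _ = 1/2 * (P w v * ∑ z ∈ Finset.univ.filter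
              (fun z : Fin n → V => b ≤ (a + f w) + Ssum f n v z), chainW P n v z) := by
              ring

/-- Main chain bound: from any start state, the sum exceeds `lam (2M+1)` with
probability at most `2^{-lam}`. -/
lemma chain_bound (P : Matrix V V ℝ) (hnn : ∀ u v, 0 ≤ P u v)
    (hst : ∀ u, ∑ v, P u v = 1) (f : V → ℝ) (hf0 : ∀ u, 0 ≤ f u)
    (hf1 : ∀ u, f u ≤ 1) (M : ℝ) (hM : 0 < M) (T : ℕ)
    (hexp' : ∀ (w : V) (n : ℕ), n ≤ T →
      ∑ r ∈ Finset.range n, ∑ u, (P ^ r) w u * f u ≤ M)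
    (lam : ℕ) (hlam : 1 ≤ lam) :
    ∀ (n : ℕ), n ≤ T → ∀ (w : V),
      ∑ z ∈ Finset.univ.filter
          (fun z : Fin n → V => (lam : ℝ) * (2*M+1) ≤ Ssum f n w z), chainW P n w z
      ≤ (1/2 : ℝ) ^ lam := by
  induction lam, hlam using Nat.le_induction with
  | base =>
      intro n hn w
      have hc : (0:ℝ) < 2*M+1 := by linarith
      have hfil : Finset.univ.filter
          (fun z : Fin n → V => ((1:ℕ) : ℝ) * (2*M+1) ≤ Ssum f n w z)
          = Finset.univ.filter
          (fun z : Fin n → V => (2*M+1) ≤ Ssum f n w z) := by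
        refine Finset.filter_congr fun z _ => ?_
        push_cast
        rw [one_mul]
      rw [hfil]
      have hmk := markov_chain P hnn hst f hf0 M n w (hexp' w n hn) _ hc
      refine hmk.trans ?_
      rw [pow_one, div_le_iff₀ hc]
      linarith
  | succ lam hlam IH =>
      intro n hn w
      have hb : (0:ℝ) < (lam : ℝ) * (2*M+1) := by
        have : (1:ℝ) ≤ (lam : ℝ) := by exact_mod_cast hlam
        nlinarith
      have hfil : Finset.univ.filter
          (fun z : Fin n → V => ((lam + 1 : ℕ) : ℝ) * (2*M+1) ≤ Ssum f n w z)
          = Finset.univ.filter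
          (fun z : Fin n → V => (lam : ℝ) * (2*M+1) + (2*M+1) ≤ (0:ℝ) + Ssum f n w z) := by
        refine Finset.filter_congr fun z _ => ?_
        push_cast
        constructor <;> intro <;> nlinarith
      rw [hfil]
      have hstep := step_lemma P hnn hst f hf0 hf1 M hM T hexp' ((lam : ℝ) * (2*M+1))
        n hn w 0 le_rfl hb
      refine hstep.trans ?_
      have hfil2 : Finset.univ.filter
          (fun z : Fin n → V => (lam : ℝ) * (2*M+1) ≤ (0:ℝ) + Ssum f n w z)
          = Finset.univ.filter
          (fun z : Fin n → V => (lam : ℝ) * (2*M+1) ≤ Ssum f n w z) := by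
        refine Finset.filter_congr fun z _ => ?_
        rw [zero_add]
      rw [hfil2, pow_succ]
      have := IH n hn w
      calc 1/2 * ∑ z ∈ Finset.univ.filter
            (fun z : Fin n → V => (lam : ℝ) * (2*M+1) ≤ Ssum f n w z), chainW P n w z
          ≤ 1/2 * (1/2:ℝ)^lam := by linarith
        _ = (1/2:ℝ)^lam * (1/2) := by ring

lemma prod_eq_chainW (P : Matrix V V ℝ) :
    ∀ (n : ℕ) (x : Fin (n+1) → V),
      ∏ i : Fin n, P (x i.castSucc) (x i.succ) = chainW P n (x 0) (Fin.tail x)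
  | 0, x => by simp [chainW]
  | n+1, x => by
      rw [Fin.prod_univ_succ, chainW]
      congr 1
      rw [← prod_eq_chainW P n (Fin.tail x)]
      refine Finset.prod_congr rfl fun i _ => ?_
      simp [Fin.tail]

lemma sum_f_eq_Ssum (f : V → ℝ) :
    ∀ (n : ℕ) (x : Fin (n+1) → V),
      ∑ t : Fin n, f (x t.castSucc) = Ssum f n (x 0) (Fin.tail x)
  | 0, x => by simp [Ssum]
  | n+1, x => by
      rw [Fin.sum_univ_succ, Ssum]
      congr 1
      rw [← sum_f_eq_Ssum f n (Fin.tail x)]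
      refine Finset.sum_congr rfl fun i _ => ?_
      simp [Fin.tail]

end aux

/-- Restart concentration bound: if from every state `w` and time `s ≤ T−1` the expected
remaining sum `E[Σ_{t=s}^{T−1} f(X_t) | X_s = w] = Σ_{r<T−s} Σ_u p^r_{w,u} f(u)` is at
most `M`, then `P(Σ_{t=0}^{T−1} f(X_t) ≥ λ(2M+1)) ≤ 2^{−λ}` for every integer `λ ≥ 1`
and every initial distribution `ν`. -/
theorem stmt9 {V : Type*} [Fintype V] [DecidableEq V]
    (P : Matrix V V ℝ) (hnn : ∀ u v, 0 ≤ P u v) (hst : ∀ u, ∑ v, P u v = 1)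
    (ν : V → ℝ) (hν : ∀ u, 0 ≤ ν u) (hνsum : ∑ u, ν u = 1)
    (T : ℕ) (f : V → ℝ) (hf0 : ∀ u, 0 ≤ f u) (hf1 : ∀ u, f u ≤ 1)
    (M : ℝ) (hM : 0 < M)
    (hexp : ∀ (w : V) (s : ℕ), s ≤ T - 1 →
      ∑ r ∈ Finset.range (T - s), ∑ u, (P ^ r) w u * f u ≤ M)
    (lam : ℕ) (hlam : 1 ≤ lam) :
    ∑ x ∈ Finset.univ.filter
        (fun x : Fin (T + 1) → V =>
          (lam : ℝ) * (2 * M + 1) ≤ ∑ t : Fin T, f (x t.castSucc)),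
      pathWeight P ν T x ≤ (1 / 2 : ℝ) ^ lam := by
  have hexp' : ∀ (w : V) (n : ℕ), n ≤ T →
      ∑ r ∈ Finset.range n, ∑ u, (P ^ r) w u * f u ≤ M := by
    intro w n hn
    rcases Nat.eq_zero_or_pos n with h0 | h1
    · subst h0; simp; linarith
    · have hs : T - (T - n) = n := by omega
      have := hexp w (T - n) (by omega)
      rwa [hs] at this
  have main : ∑ x ∈ Finset.univ.filter
        (fun x : Fin (T + 1) → V =>
          (lam : ℝ) * (2 * M + 1) ≤ ∑ t : Fin T, f (x t.castSucc)),
      pathWeight P ν T x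
      = ∑ v, ν v * ∑ z ∈ Finset.univ.filter
          (fun z : Fin T → V => (lam : ℝ) * (2*M+1) ≤ Ssum f T v z), chainW P T v z := by
    rw [Finset.sum_filter,
      sum_pi_succ (fun x => if (lam : ℝ) * (2 * M + 1) ≤ ∑ t : Fin T, f (x t.castSucc)
        then pathWeight P ν T x else 0)]
    refine Finset.sum_congr rfl fun v _ => ?_
    rw [Finset.mul_sum, Finset.sum_filter]
    refine Finset.sum_congr rfl fun z _ => ?_
    rw [sum_f_eq_Ssum f T (Fin.cons v z)]
    unfold pathWeight
    rw [prod_eq_chainW P T (Fin.cons v z)]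
    simp only [Fin.cons_zero, Fin.tail_cons, mul_ite, mul_zero]
  rw [main]
  calc ∑ v, ν v * ∑ z ∈ Finset.univ.filter
        (fun z : Fin T → V => (lam : ℝ) * (2*M+1) ≤ Ssum f T v z), chainW P T v z
      ≤ ∑ v, ν v * (1/2:ℝ)^lam := by
        refine Finset.sum_le_sum fun v _ => ?_
        exact mul_le_mul_of_nonneg_left
          (chain_bound P hnn hst f hf0 hf1 M hM T hexp' lam hlam T le_rfl v) (hν v)
    _ = (1/2:ℝ)^lam := by
        rw [← Finset.sum_mul, hνsum, one_mul]
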